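/- Let d ≥ 1, let x_1, …, x_{d+1} ∈ ℝ^d be affinely independent, let τ be their closed convex hull, and let λ_1, …, λ_{d+1} be the barycentric coordinate functions of the simplex. Then the restrictions of λ_1, …, λ_{d+1} to τ are linearly independent in L²(τ), and there exists a unique family of affine functions ψ_1, …, ψ_{d+1} : ℝ^d → ℝ that is biorthogonal to the barycentric coordinates on τ: ∫_τ λ_k(x) ψ_l(x) dx = δ_{kl} for all k, l ∈ {1, …, d+1}. -/

import Mathlib

open MeasureTheory

private lemma affine_sum_apply {d : ℕ} {ι : Type*} (s : Finset ι)
    (f : ι → (EuclideanSpace ℝ (Fin d) →ᵃ[ℝ] ℝ)) (y : EuclideanSpace ℝ (Fin d)) :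
    (∑ i ∈ s, f i) y = ∑ i ∈ s, f i y := by
  classical
  induction s using Finset.induction_on with
  | empty => simp
  | insert _ _ h ih =>
      rw [Finset.sum_insert h, Finset.sum_insert h, AffineMap.coe_add, Pi.add_apply, ih]

/-- The restrictions of the barycentric coordinate functions of a
nondegenerate `d`-simplex `τ` to `τ` are linearly independent in `L²(τ)`
(i.e. any linear combination vanishing a.e. on `τ` has zero coefficients), and
there is a unique family of affine functions `ψ_1, …, ψ_{d+1}` biorthogonal to
the barycentric coordinates on `τ`: `∫_τ λ_k ψ_l = δ_{kl}`. -/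
theorem barycentric_biorthogonal_family
    (d : ℕ) (hd : 1 ≤ d)
    (x : Fin (d + 1) → EuclideanSpace ℝ (Fin d))
    (hx : AffineIndependent ℝ x)
    (τ : Set (EuclideanSpace ℝ (Fin d)))
    (hτ : τ = convexHull ℝ (Set.range x))
    (lam : Fin (d + 1) → (EuclideanSpace ℝ (Fin d) →ᵃ[ℝ] ℝ))
    (hlam : ∀ i j, lam i (x j) = if i = j then 1 else 0) :
    (∀ u : Fin (d + 1) → ℝ,
        (∀ᵐ y ∂(volume.restrict τ), ∑ i, u i * lam i y = 0) → u = 0) ∧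
      (∃! ψ : Fin (d + 1) → (EuclideanSpace ℝ (Fin d) →ᵃ[ℝ] ℝ),
        ∀ k l, (∫ y in τ, lam k y * ψ l y) = if k = l then (1 : ℝ) else 0) := by
  classical
  -- affine span of the vertices is everything
  have htop : affineSpan ℝ (Set.range x) = ⊤ := by
    rw [hx.affineSpan_eq_top_iff_card_eq_finrank_add_one]
    simp [finrank_euclideanSpace_fin]
  let b : AffineBasis (Fin (d + 1)) ℝ (EuclideanSpace ℝ (Fin d)) := ⟨x, hx, htop⟩
  have hbx : ∀ i, b i = x i := fun i => rfl
  -- every affine function is a combination of the barycentric coordinates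
  have repr0 : ∀ (f : EuclideanSpace ℝ (Fin d) →ᵃ[ℝ] ℝ) y,
      f y = ∑ j, b.coord j y * f (x j) := by
    intro f y
    calc f y = f (Finset.univ.affineCombination ℝ b fun i => b.coord i y) := by
          rw [b.affineCombination_coord_eq_self y]
      _ = Finset.univ.affineCombination ℝ (f ∘ b) (fun i => b.coord i y) :=
          Finset.map_affineCombination _ _ _ (b.sum_coord_apply_eq_one y) f
      _ = ∑ j, b.coord j y • (f ∘ b) j :=
          Finset.affineCombination_eq_linear_combination _ _ _ (b.sum_coord_apply_eq_one y)
      _ = ∑ j, b.coord j y * f (x j) := by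
          refine Finset.sum_congr rfl fun j _ => ?_
          rw [Function.comp_apply, hbx, smul_eq_mul]
  have hcoord : ∀ i y, b.coord i y = lam i y := by
    intro i y
    have h2 : lam i y = b.coord i y := by
      rw [repr0 (lam i) y]
      simp [hlam]
    exact h2.symm
  have repr : ∀ (f : EuclideanSpace ℝ (Fin d) →ᵃ[ℝ] ℝ) y,
      f y = ∑ j, lam j y * f (x j) := by
    intro f y
    rw [repr0 f y]
    exact Finset.sum_congr rfl fun j _ => by rw [hcoord]
  -- basic properties of τ
  have hτconv : Convex ℝ τ := hτ ▸ convex_convexHull ℝ _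
  have hτcomp : IsCompact τ := hτ ▸ (Set.finite_range x).isCompact_convexHull ℝ
  have hτmeas : MeasurableSet τ := hτcomp.isClosed.measurableSet
  have hxmem : ∀ j, x j ∈ τ := fun j => hτ ▸ subset_convexHull ℝ _ (Set.mem_range_self j)
  have hint : (interior τ).Nonempty := by
    rw [hτ]
    exact interior_convexHull_nonempty_iff_affineSpan_eq_top.mpr htop
  have hcont : ∀ i, Continuous fun y => lam i y :=
    fun i => (lam i).continuous_of_finiteDimensional
  -- a continuous function vanishing a.e. on τ vanishes on τ
  have hvanish : ∀ f : EuclideanSpace ℝ (Fin d) → ℝ, Continuous f →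
      (∀ᵐ y ∂(volume.restrict τ), f y = 0) → ∀ p ∈ τ, f p = 0 := by
    intro f hf hae p hp
    have h0 : ∀ z ∈ interior τ, f z = 0 := by
      intro z hz
      by_contra hz0
      have hUopen : IsOpen (interior τ ∩ {y | f y ≠ 0}) :=
        isOpen_interior.inter (isOpen_ne_fun hf continuous_const)
      have hms : MeasurableSet {y | f y ≠ 0} :=
        (isClosed_eq hf continuous_const).measurableSet.compl
      have hU0 : volume (interior τ ∩ {y | f y ≠ 0}) = 0 := by
        have h1 := ae_iff.mp hae
        rw [Measure.restrict_apply hms] at h1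
        refine measure_mono_null ?_ h1
        intro y hy
        exact ⟨hy.2, interior_subset hy.1⟩
      have hempty := hUopen.eq_empty_of_measure_zero hU0
      have hzU : z ∈ interior τ ∩ {y | f y ≠ 0} := ⟨hz, hz0⟩
      rw [hempty] at hzU
      exact hzU
    obtain ⟨y0, hy0⟩ := hint
    have hseg : ∀ t ∈ Set.Ioo (0 : ℝ) 1, f (AffineMap.lineMap p y0 t) = 0 := by
      intro t ht
      have hmem : AffineMap.lineMap p y0 t ∈ openSegment ℝ p y0 := by
        rw [openSegment_eq_image_lineMap]
        exact Set.mem_image_of_mem _ ht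
      exact h0 _ (hτconv.openSegment_closure_interior_subset_interior
        (subset_closure hp) hy0 hmem)
    have hne : (nhdsWithin (0 : ℝ) (Set.Ioo (0 : ℝ) 1)).NeBot := by
      rw [← mem_closure_iff_nhdsWithin_neBot, closure_Ioo one_ne_zero.symm]
      exact Set.left_mem_Icc.mpr zero_le_one
    have hcl : Continuous fun t : ℝ => f (AffineMap.lineMap p y0 t) :=
      hf.comp (AffineMap.lineMap p y0 :
        ℝ →ᵃ[ℝ] EuclideanSpace ℝ (Fin d)).continuous_of_finiteDimensional
    have hc : Filter.Tendsto (fun t : ℝ => f (AffineMap.lineMap p y0 t))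
        (nhdsWithin (0 : ℝ) (Set.Ioo (0 : ℝ) 1)) (nhds (f p)) := by
      have h2 := hcl.tendsto 0
      rw [AffineMap.lineMap_apply_zero] at h2
      exact h2.mono_left nhdsWithin_le_nhds
    have hc0 : Filter.Tendsto (fun t : ℝ => f (AffineMap.lineMap p y0 t))
        (nhdsWithin (0 : ℝ) (Set.Ioo (0 : ℝ) 1)) (nhds 0) := by
      refine Filter.Tendsto.congr' ?_ tendsto_const_nhds
      filter_upwards [self_mem_nhdsWithin] with t ht
      exact (hseg t ht).symm
    exact tendsto_nhds_unique hc hc0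
  -- Part 1: linear independence in L²
  have part1 : ∀ u : Fin (d + 1) → ℝ,
      (∀ᵐ y ∂(volume.restrict τ), ∑ i, u i * lam i y = 0) → u = 0 := by
    intro u hu
    have hfc : Continuous fun y => ∑ i, u i * lam i y :=
      continuous_finset_sum _ fun i _ => continuous_const.mul (hcont i)
    funext j
    have hj := hvanish _ hfc hu (x j) (hxmem j)
    simpa [hlam] using hj
  refine ⟨part1, ?_⟩
  -- Gram matrix
  set G : Matrix (Fin (d + 1)) (Fin (d + 1)) ℝ :=
    Matrix.of fun k l => ∫ y in τ, lam k y * lam l y with hG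
  have hInt : ∀ g h : EuclideanSpace ℝ (Fin d) → ℝ, Continuous g → Continuous h →
      IntegrableOn (fun y => g y * h y) τ volume :=
    fun g h hg hh => (hg.mul hh).continuousOn.integrableOn_compact hτcomp
  have hGvec : ∀ (c : Fin (d + 1) → ℝ) (k : Fin (d + 1)),
      (∫ y in τ, lam k y * ∑ m, c m * lam m y) = ∑ m, G k m * c m := by
    intro c k
    have h1 : (∫ y in τ, lam k y * ∑ m, c m * lam m y)
        = ∫ y in τ, ∑ m, c m * (lam k y * lam m y) := by
      congr 1
      ext y
      rw [Finset.mul_sum]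
      exact Finset.sum_congr rfl fun m _ => by ring
    rw [h1, integral_finset_sum]
    · refine Finset.sum_congr rfl fun m _ => ?_
      rw [integral_const_mul]
      simp [hG, mul_comm]
    · intro m _
      exact (Integrable.const_mul (hInt _ _ (hcont k) (hcont m)) (c m))
  have hGinj : ∀ c : Fin (d + 1) → ℝ, G.mulVec c = 0 → c = 0 := by
    intro c hc
    apply part1
    set f := fun y => ∑ i, c i * lam i y with hfdef
    have hfc : Continuous f :=
      continuous_finset_sum _ fun i _ => continuous_const.mul (hcont i)
    have hI : (∫ y in τ, f y * f y) = 0 := by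
      have h1 : (∫ y in τ, f y * f y) = ∑ k, c k * ∫ y in τ, lam k y * f y := by
        have h2 : ∀ y, f y * f y = ∑ k, c k * (lam k y * f y) := by
          intro y
          rw [hfdef]
          simp only
          rw [Finset.sum_mul]
          exact Finset.sum_congr rfl fun k _ => by ring
        rw [show (fun y => f y * f y) = fun y => ∑ k, c k * (lam k y * f y) from funext h2]
        rw [integral_finset_sum]
        · exact Finset.sum_congr rfl fun k _ => integral_const_mul _ _
        · intro k _
          exact (hInt _ _ (hcont k) hfc).const_mul (c k)
      rw [h1]
      have h3 : ∀ k, (∫ y in τ, lam k y * f y) = 0 := by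
        intro k
        rw [hGvec c k]
        have := congrFun hc k
        simpa [Matrix.mulVec, dotProduct] using this
      simp [h3]
    have hnn : (0 : EuclideanSpace ℝ (Fin d) → ℝ) ≤ fun y => f y * f y :=
      fun y => mul_self_nonneg (f y)
    have hint2 : Integrable (fun y => f y * f y) (volume.restrict τ) :=
      hInt _ _ hfc hfc
    have hae0 : (fun y => f y * f y) =ᵐ[volume.restrict τ] 0 :=
      (integral_eq_zero_iff_of_nonneg hnn hint2).mp hI
    filter_upwards [hae0] with y hy
    exact mul_self_eq_zero.mp hy
  -- G is invertible
  have hdet : IsUnit G.det := by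
    rw [← Matrix.isUnit_iff_isUnit_det, ← Matrix.mulVec_injective_iff_isUnit]
    intro a b hab
    have h1 : G.mulVec (a - b) = 0 := by
      rw [Matrix.mulVec_sub, hab, sub_self]
    have := hGinj _ h1
    exact sub_eq_zero.mp this
  have hGH : G * G⁻¹ = 1 := Matrix.mul_nonsing_inv G hdet
  -- the biorthogonal family
  set ψ : Fin (d + 1) → (EuclideanSpace ℝ (Fin d) →ᵃ[ℝ] ℝ) :=
    fun l => ∑ m, G⁻¹ m l • lam m with hψdef
  have happ : ∀ l y, ψ l y = ∑ m, G⁻¹ m l * lam m y := by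
    intro l y
    rw [hψdef]
    simp only
    rw [affine_sum_apply]
    exact Finset.sum_congr rfl fun m _ => by rw [AffineMap.coe_smul]; rfl
  have hψprop : ∀ k l, (∫ y in τ, lam k y * ψ l y) = if k = l then (1 : ℝ) else 0 := by
    intro k l
    have h1 : (∫ y in τ, lam k y * ψ l y) = ∑ m, G k m * G⁻¹ m l := by
      have h2 : (fun y => lam k y * ψ l y)
          = fun y => lam k y * ∑ m, G⁻¹ m l * lam m y := by
        funext y; rw [happ]
      rw [show (∫ y in τ, lam k y * ψ l y)
          = ∫ y in τ, lam k y * ∑ m, G⁻¹ m l * lam m y by rw [h2]]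
      exact hGvec (fun m => G⁻¹ m l) k
    rw [h1, ← Matrix.mul_apply, hGH, Matrix.one_apply]
  refine ⟨ψ, hψprop, ?_⟩
  -- uniqueness
  intro ψ' hψ'
  funext l
  have hcv : G.mulVec (fun m => ψ' l (x m)) = G.mulVec (fun m => ψ l (x m)) := by
    funext k
    have key : ∀ χ : Fin (d + 1) → (EuclideanSpace ℝ (Fin d) →ᵃ[ℝ] ℝ),
        (∀ k' l', (∫ y in τ, lam k' y * χ l' y) = if k' = l' then (1 : ℝ) else 0) →
        G.mulVec (fun m => χ l (x m)) k = if k = l then (1 : ℝ) else 0 := by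
      intro χ hχ
      have h2 : (∫ y in τ, lam k y * χ l y)
          = ∫ y in τ, lam k y * ∑ m, χ l (x m) * lam m y := by
        congr 1
        funext y
        congr 1
        rw [repr (χ l) y]
        exact Finset.sum_congr rfl fun m _ => by ring
      have h3 := hGvec (fun m => χ l (x m)) k
      rw [← h2, hχ k l] at h3
      rw [Matrix.mulVec, dotProduct]
      exact h3.symm
    rw [key ψ' hψ', key ψ hψprop]
  have hceq : (fun m => ψ' l (x m)) = fun m => ψ l (x m) := by
    have h1 : G.mulVec ((fun m => ψ' l (x m)) - fun m => ψ l (x m)) = 0 := by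
      rw [Matrix.mulVec_sub, hcv, sub_self]
    exact sub_eq_zero.mp (hGinj _ h1)
  apply AffineMap.ext
  intro y
  rw [repr (ψ' l) y, repr (ψ l) y]
  exact Finset.sum_congr rfl fun m _ => by rw [congrFun hceq m]
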